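/- Let P be a nonzero real 3×3 skew-symmetric matrix and a, b ∈ ℝ³ vectors with P b = 0. Then P a = 0 if and only if P a + g(a) b = 0. (At regular points, the Hamiltonian vector field ξ_P = PdH and the metriplectic vector field ξ = PdH + gdS vanish simultaneously.) -/

import Mathlib

open Matrix RealInnerProductSpace

/-- The dissipative tensor `g(a) = a ⊗ a − ‖a‖² I` of the paper, as a 3×3 matrix;
it acts by `g(a) v = ⟨a, v⟩ a − ‖a‖² v`. -/
noncomputable def gmat (a : EuclideanSpace ℝ (Fin 3)) : Matrix (Fin 3) (Fin 3) ℝ :=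
  Matrix.vecMulVec a a - (‖a‖ ^ 2) • 1

lemma cross_aux (v0 v1 v2 x0 x1 x2 y0 y1 y2 : ℝ)
    (hx0 : v1*x2 - v2*x1 = 0) (hx1 : v2*x0 - v0*x2 = 0) (hx2 : v0*x1 - v1*x0 = 0)
    (hy0 : v1*y2 - v2*y1 = 0) (hy1 : v2*y0 - v0*y2 = 0) (hy2 : v0*y1 - v1*y0 = 0)
    (hv : v0 ≠ 0 ∨ v1 ≠ 0 ∨ v2 ≠ 0) :
    x1*y2 - x2*y1 = 0 ∧ x2*y0 - x0*y2 = 0 ∧ x0*y1 - x1*y0 = 0 := by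
  rcases hv with h | h | h
  · refine ⟨?_, ?_, ?_⟩
    · have h9 : v0 * (x1*y2 - x2*y1) = 0 := by linear_combination -y0*hx0 - x1*hy1 - x2*hy2
      exact (mul_eq_zero.mp h9).resolve_left h
    · have h9 : v0 * (x2*y0 - x0*y2) = 0 := by linear_combination -y0*hx1 + x0*hy1
      exact (mul_eq_zero.mp h9).resolve_left h
    · have h9 : v0 * (x0*y1 - x1*y0) = 0 := by linear_combination -y0*hx2 + x0*hy2
      exact (mul_eq_zero.mp h9).resolve_left h
  · refine ⟨?_, ?_, ?_⟩
    · have h9 : v1 * (x1*y2 - x2*y1) = 0 := by linear_combination -y1*hx0 + x1*hy0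
      exact (mul_eq_zero.mp h9).resolve_left h
    · have h9 : v1 * (x2*y0 - x0*y2) = 0 := by linear_combination -y1*hx1 - x2*hy2 - x0*hy0
      exact (mul_eq_zero.mp h9).resolve_left h
    · have h9 : v1 * (x0*y1 - x1*y0) = 0 := by linear_combination -y1*hx2 + x1*hy2
      exact (mul_eq_zero.mp h9).resolve_left h
  · refine ⟨?_, ?_, ?_⟩
    · have h9 : v2 * (x1*y2 - x2*y1) = 0 := by linear_combination -y2*hx0 + x2*hy0
      exact (mul_eq_zero.mp h9).resolve_left h
    · have h9 : v2 * (x2*y0 - x0*y2) = 0 := by linear_combination -y2*hx1 + x2*hy1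
      exact (mul_eq_zero.mp h9).resolve_left h
    · have h9 : v2 * (x0*y1 - x1*y0) = 0 := by linear_combination -y2*hx2 - x0*hy0 - x1*hy1
      exact (mul_eq_zero.mp h9).resolve_left h

set_option maxHeartbeats 1000000 in
/-- At regular points, the Hamiltonian vector field `P dH` and the metriplectic vector
field `P dH + g dS` vanish simultaneously. -/
theorem regular_equilibria_iff (P : Matrix (Fin 3) (Fin 3) ℝ) (hP : Pᵀ = -P) (hP0 : P ≠ 0)
    (a b : EuclideanSpace ℝ (Fin 3)) (hb : P *ᵥ b = 0) :
    P *ᵥ a = 0 ↔ P *ᵥ a + gmat a *ᵥ b = 0 := by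
  have hskew : ∀ i j, P j i = - P i j := fun i j => by
    have := congrFun (congrFun hP i) j
    simpa [Matrix.transpose_apply] using this
  set p0 := P 2 1 with hp0d
  set p1 := P 0 2 with hp1d
  set p2 := P 1 0 with hp2d
  have h00 : P 0 0 = 0 := by have := hskew 0 0; linarith
  have h11 : P 1 1 = 0 := by have := hskew 1 1; linarith
  have h22 : P 2 2 = 0 := by have := hskew 2 2; linarith
  have h01 : P 0 1 = -p2 := hskew 1 0
  have h12 : P 1 2 = -p0 := hskew 2 1
  have h20 : P 2 0 = -p1 := hskew 0 2
  have hv : p0 ≠ 0 ∨ p1 ≠ 0 ∨ p2 ≠ 0 := by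
    by_contra h'
    push_neg at h'
    obtain ⟨e0, e1, e2⟩ := h'
    apply hP0
    ext i j
    fin_cases i <;> fin_cases j <;>
      simp [h00, h11, h22, h01, h12, h20, ← hp0d, ← hp1d, ← hp2d, e0, e1, e2]
  have hPv : ∀ (v : EuclideanSpace ℝ (Fin 3)),
      (P *ᵥ v) 0 = p1 * v 2 - p2 * v 1 ∧ (P *ᵥ v) 1 = p2 * v 0 - p0 * v 2 ∧
      (P *ᵥ v) 2 = p0 * v 1 - p1 * v 0 := by
    intro v
    refine ⟨?_, ?_, ?_⟩ <;>
      simp [Matrix.mulVec, dotProduct, Fin.sum_univ_three,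
        h00, h11, h22, h01, h12, h20] <;> ring
  have hmv : ∀ (v : EuclideanSpace ℝ (Fin 3)), (P *ᵥ v = 0) ↔
      (p1 * v 2 - p2 * v 1 = 0 ∧ p2 * v 0 - p0 * v 2 = 0 ∧ p0 * v 1 - p1 * v 0 = 0) := by
    intro v
    obtain ⟨q0, q1, q2⟩ := hPv v
    constructor
    · intro h
      refine ⟨?_, ?_, ?_⟩
      · rw [← q0]; exact congrFun h 0
      · rw [← q1]; exact congrFun h 1
      · rw [← q2]; exact congrFun h 2
    · rintro ⟨e0, e1, e2⟩
      funext i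
      fin_cases i
      · show (P *ᵥ v) 0 = 0; rw [q0]; exact e0
      · show (P *ᵥ v) 1 = 0; rw [q1]; exact e1
      · show (P *ᵥ v) 2 = 0; rw [q2]; exact e2
  have hna : ‖a‖ ^ 2 = a 0 ^ 2 + a 1 ^ 2 + a 2 ^ 2 := by
    rw [← real_inner_self_eq_norm_sq]
    rw [PiLp.inner_apply]
    simp [Fin.sum_univ_three]
  have hg : ∀ i, (gmat a *ᵥ b) i =
      a i * (a 0 * b 0 + a 1 * b 1 + a 2 * b 2) - (a 0 ^ 2 + a 1 ^ 2 + a 2 ^ 2) * b i := by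
    intro i
    simp only [gmat, Matrix.sub_mulVec, Matrix.smul_mulVec, Matrix.one_mulVec,
      Pi.sub_apply, Pi.smul_apply, smul_eq_mul, hna]
    simp [Matrix.mulVec, dotProduct, Matrix.vecMulVec_apply, Fin.sum_univ_three]
    ring
  obtain ⟨hb0, hb1, hb2⟩ := (hmv b).mp hb
  constructor
  · intro ha
    obtain ⟨ha0, ha1, ha2⟩ := (hmv a).mp ha
    obtain ⟨A0, A1, A2⟩ := cross_aux p0 p1 p2 (a 0) (a 1) (a 2) (b 0) (b 1) (b 2)
      ha0 ha1 ha2 hb0 hb1 hb2 hv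
    obtain ⟨q0, q1, q2⟩ := hPv a
    funext i
    fin_cases i
    · show (P *ᵥ a) 0 + (gmat a *ᵥ b) 0 = 0
      rw [q0, hg 0]
      linear_combination ha0 + a 1 * A2 - a 2 * A1
    · show (P *ᵥ a) 1 + (gmat a *ᵥ b) 1 = 0
      rw [q1, hg 1]
      linear_combination ha1 + a 2 * A0 - a 0 * A2
    · show (P *ᵥ a) 2 + (gmat a *ᵥ b) 2 = 0
      rw [q2, hg 2]
      linear_combination ha2 + a 0 * A1 - a 1 * A0
  · intro h
    obtain ⟨q0, q1, q2⟩ := hPv a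
    have E0 : (p1 * a 2 - p2 * a 1) + (a 0 * (a 0 * b 0 + a 1 * b 1 + a 2 * b 2)
        - (a 0 ^ 2 + a 1 ^ 2 + a 2 ^ 2) * b 0) = 0 := by
      have := congrFun h 0
      rw [Pi.add_apply, q0, hg 0] at this
      simpa using this
    have E1 : (p2 * a 0 - p0 * a 2) + (a 1 * (a 0 * b 0 + a 1 * b 1 + a 2 * b 2)
        - (a 0 ^ 2 + a 1 ^ 2 + a 2 ^ 2) * b 1) = 0 := by
      have := congrFun h 1
      rw [Pi.add_apply, q1, hg 1] at this
      simpa using this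
    have E2 : (p0 * a 1 - p1 * a 0) + (a 2 * (a 0 * b 0 + a 1 * b 1 + a 2 * b 2)
        - (a 0 ^ 2 + a 1 ^ 2 + a 2 ^ 2) * b 2) = 0 := by
      have := congrFun h 2
      rw [Pi.add_apply, q2, hg 2] at this
      simpa using this
    have hkey : (a 0 * b 0 + a 1 * b 1 + a 2 * b 2) ^ 2 =
        (a 0 ^ 2 + a 1 ^ 2 + a 2 ^ 2) * (b 0 ^ 2 + b 1 ^ 2 + b 2 ^ 2) := by
      linear_combination b 0 * E0 + b 1 * E1 + b 2 * E2 + a 0 * hb0 + a 1 * hb1 + a 2 * hb2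
    have hsq : (a 1 * b 2 - a 2 * b 1) ^ 2 + (a 2 * b 0 - a 0 * b 2) ^ 2
        + (a 0 * b 1 - a 1 * b 0) ^ 2 = 0 := by
      linear_combination -hkey
    have c0 : a 1 * b 2 - a 2 * b 1 = 0 := by
      have : (a 1 * b 2 - a 2 * b 1) ^ 2 = 0 := by
        linarith [hsq, sq_nonneg (a 2 * b 0 - a 0 * b 2), sq_nonneg (a 0 * b 1 - a 1 * b 0), sq_nonneg (a 1 * b 2 - a 2 * b 1)]
      exact sq_eq_zero_iff.mp this
    have c1 : a 2 * b 0 - a 0 * b 2 = 0 := by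
      have : (a 2 * b 0 - a 0 * b 2) ^ 2 = 0 := by
        linarith [hsq, sq_nonneg (a 1 * b 2 - a 2 * b 1), sq_nonneg (a 0 * b 1 - a 1 * b 0), sq_nonneg (a 2 * b 0 - a 0 * b 2)]
      exact sq_eq_zero_iff.mp this
    have c2 : a 0 * b 1 - a 1 * b 0 = 0 := by
      have : (a 0 * b 1 - a 1 * b 0) ^ 2 = 0 := by
        linarith [hsq, sq_nonneg (a 1 * b 2 - a 2 * b 1), sq_nonneg (a 2 * b 0 - a 0 * b 2), sq_nonneg (a 0 * b 1 - a 1 * b 0)]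
      exact sq_eq_zero_iff.mp this
    by_cases hbz : b 0 = 0 ∧ b 1 = 0 ∧ b 2 = 0
    · obtain ⟨z0, z1, z2⟩ := hbz
      refine (hmv a).mpr ⟨?_, ?_, ?_⟩
      · linear_combination E0 + (a 0 ^ 2 + a 1 ^ 2 + a 2 ^ 2 - a 0 * a 0) * z0
          - a 0 * a 1 * z1 - a 0 * a 2 * z2
      · linear_combination E1 + (a 0 ^ 2 + a 1 ^ 2 + a 2 ^ 2 - a 1 * a 1) * z1
          - a 1 * a 0 * z0 - a 1 * a 2 * z2
      · linear_combination E2 + (a 0 ^ 2 + a 1 ^ 2 + a 2 ^ 2 - a 2 * a 2) * z2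
          - a 2 * a 0 * z0 - a 2 * a 1 * z1
    · have hbv : b 0 ≠ 0 ∨ b 1 ≠ 0 ∨ b 2 ≠ 0 := by tauto
      obtain ⟨r0, r1, r2⟩ := cross_aux (b 0) (b 1) (b 2) p0 p1 p2 (a 0) (a 1) (a 2)
        (by linear_combination -hb0) (by linear_combination -hb1) (by linear_combination -hb2)
        (by linear_combination -c0) (by linear_combination -c1) (by linear_combination -c2)
        hbv
      exact (hmv a).mpr ⟨r0, r1, r2⟩
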